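/- arXiv:2409.19446 — 2 statements merged into one kernel-verified Lean document; each statement's English description precedes it below -/
import Mathlib

section
/- If M is a nonnegative integral primitive n×n matrix whose largest eigenvalue λ satisfies λ > 1, then λ^n ≥ |M| − n + 1, where |M| denotes the sum of all entries of M. -/
open Polynomial Matrix in
lemma aux_root_mem_spectrum {n : ℕ} (B : Matrix (Fin n) (Fin n) ℂ) (ν : ℂ)
    (h : ν ∈ B.charpoly.roots) : ν ∈ spectrum ℂ B := by
  have hr : B.charpoly.IsRoot ν := isRoot_of_mem_roots h
  have hdet : (Matrix.scalar (Fin n) ν - B).det = 0 := by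
    have := hr
    rw [Polynomial.IsRoot, Matrix.charpoly, eval_det, matPolyEquiv_charmatrix] at this
    simpa using this
  rw [spectrum.mem_iff]
  intro hu
  rw [Matrix.isUnit_iff_isUnit_det] at hu
  have : (algebraMap ℂ (Matrix (Fin n) (Fin n) ℂ)) ν - B = Matrix.scalar (Fin n) ν - B := rfl
  rw [this, hdet] at hu
  exact (not_isUnit_zero : ¬ IsUnit (0:ℂ)) hu

open Matrix in
lemma aux_trace_bound {n : ℕ} (M : Matrix (Fin n) (Fin n) ℕ) (lam : ℝ)
    (hmax : ∀ μ ∈ spectrum ℂ (M.map (Nat.cast : ℕ → ℂ)), ‖μ‖ ≤ lam)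
    (hlam : 0 ≤ lam) (m : ℕ) (hm : 0 < m) :
    ((Matrix.trace (M ^ m) : ℕ) : ℝ) ≤ n * lam ^ m := by
  set B : Matrix (Fin n) (Fin n) ℂ := M.map (Nat.cast : ℕ → ℂ) with hB
  have hBpow : B ^ m = (M ^ m).map (Nat.cast : ℕ → ℂ) := by
    have : ∀ (N : Matrix (Fin n) (Fin n) ℕ), N.map (Nat.cast : ℕ → ℂ) =
        (Nat.castRingHom ℂ).mapMatrix N := fun _ => rfl
    rw [hB, this, ← map_pow, ← this]
  have htr : (B ^ m).trace = ((Matrix.trace (M ^ m) : ℕ) : ℂ) := by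
    rw [hBpow]
    simp [Matrix.trace, Matrix.diag, Matrix.map_apply]
  have hroots : (B ^ m).trace = ((B ^ m).charpoly.roots).sum :=
    Matrix.trace_eq_sum_roots_charpoly _
  have hbound : ∀ x ∈ (B ^ m).charpoly.roots.map norm, x ≤ lam ^ m := by
    intro x hx
    obtain ⟨ν, hν, rfl⟩ := Multiset.mem_map.mp hx
    have hν' : ν ∈ spectrum ℂ (B ^ m) := aux_root_mem_spectrum _ _ hν
    rw [spectrum.map_pow_of_pos B hm] at hν'
    obtain ⟨μ, hμ, rfl⟩ := hν'
    rw [norm_pow]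
    exact pow_le_pow_left₀ (norm_nonneg μ) (hmax μ hμ) m
  have hcard : (Multiset.card ((B ^ m).charpoly.roots)) ≤ n := by
    calc Multiset.card ((B ^ m).charpoly.roots) ≤ (B ^ m).charpoly.natDegree :=
          Polynomial.card_roots' _
      _ = Fintype.card (Fin n) := Matrix.charpoly_natDegree_eq_dim _
      _ = n := Fintype.card_fin n
  calc ((Matrix.trace (M ^ m) : ℕ) : ℝ) = ‖((Matrix.trace (M ^ m) : ℕ) : ℂ)‖ := by
        rw [Complex.norm_natCast]
    _ = ‖(B ^ m).trace‖ := by rw [htr]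
    _ = ‖((B ^ m).charpoly.roots).sum‖ := by rw [hroots]
    _ ≤ (((B ^ m).charpoly.roots).map (fun z => ‖z‖)).sum := norm_multiset_sum_le _
    _ ≤ (Multiset.card (((B ^ m).charpoly.roots).map (fun z => ‖z‖))) • (lam ^ m) := by
        apply Multiset.sum_le_card_nsmul
        intro x hx
        apply hbound
        exact hx
    _ ≤ n * lam ^ m := by
        rw [Multiset.card_map, nsmul_eq_mul]
        exact mul_le_mul_of_nonneg_right (by exact_mod_cast hcard) (pow_nonneg hlam m)

open Finset Matrix in
/-- In a primitive nonnegative integer matrix, every row sum of `M ^ n` is at least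
the total entry sum minus `n - 1`. -/
lemma aux_rowsum_pow (n k : ℕ) (M : Matrix (Fin n) (Fin n) ℕ) (hk : 0 < k)
    (hpos : ∀ i j, 0 < (M ^ k) i j) (i0 : Fin n) :
    (∑ i, ∑ j, M i j) + 1 ≤ (∑ j, (M ^ n) i0 j) + n := by
  have hn : 0 < n := i0.pos
  -- every row sum is positive
  have hrow : ∀ u : Fin n, 1 ≤ ∑ j, M u j := by
    intro u
    by_contra hcon
    have hz : ∀ j, M u j = 0 := by
      intro j
      have : ∑ j, M u j = 0 := by omega
      exact (Finset.sum_eq_zero_iff.mp this) j (mem_univ j)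
    obtain ⟨k', rfl⟩ : ∃ k', k = k' + 1 := ⟨k - 1, by omega⟩
    have : (M ^ (k' + 1)) u u = 0 := by
      rw [pow_succ']
      rw [Matrix.mul_apply]
      exact Finset.sum_eq_zero (fun z _ => by rw [hz z, zero_mul])
    exact absurd this (by have := hpos u u; omega)
  -- reachability function
  have hex : ∀ j, ∃ t, 0 < (M ^ t) i0 j := fun j => ⟨k, hpos i0 j⟩
  set d : Fin n → ℕ := fun j => Nat.find (hex j) with hd
  have hd_spec : ∀ j, 0 < (M ^ (d j)) i0 j := fun j => Nat.find_spec (hex j)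
  have hd_le : ∀ j t, 0 < (M ^ t) i0 j → d j ≤ t := fun j t ht => Nat.find_le ht
  have hd0 : d i0 = 0 := by
    have : 0 < (M ^ 0) i0 i0 := by simp
    have := hd_le i0 0 this
    omega
  have hd0' : ∀ j, d j = 0 → j = i0 := by
    intro j hj
    have := hd_spec j
    rw [hj, pow_zero] at this
    by_contra hne
    rw [Matrix.one_apply_ne (Ne.symm hne)] at this
    omega
  have hstep_up : ∀ (u j : Fin n) (t : ℕ), 0 < (M ^ t) i0 u → 0 < M u j →
      0 < (M ^ (t + 1)) i0 j := by
    intro u j t h1 h2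
    rw [pow_succ, Matrix.mul_apply]
    have : 0 < (M ^ t) i0 u * M u j := Nat.mul_pos h1 h2
    calc 0 < (M ^ t) i0 u * M u j := this
      _ ≤ ∑ z, (M ^ t) i0 z * M z j :=
        Finset.single_le_sum (f := fun z => (M ^ t) i0 z * M z j)
          (fun z _ => Nat.zero_le _) (mem_univ u)
  have hstep_down : ∀ (j : Fin n) (t : ℕ), 0 < (M ^ (t + 1)) i0 j →
      ∃ u, 0 < (M ^ t) i0 u ∧ 0 < M u j := by
    intro j t h
    rw [pow_succ, Matrix.mul_apply] at h
    by_contra hcon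
    push_neg at hcon
    have : ∑ z, (M ^ t) i0 z * M z j = 0 := by
      apply Finset.sum_eq_zero
      intro z _
      rcases Nat.eq_zero_or_pos ((M ^ t) i0 z) with h0 | h1
      · rw [h0, zero_mul]
      · have h2 := hcon z h1
        have : M z j = 0 := by omega
        rw [this, mul_zero]
    omega
  -- distances are at most n - 1
  have hclaim : ∀ t : ℕ, (∀ j, d j ≤ t) ∨ t + 1 ≤ (univ.filter (fun u => d u ≤ t)).card := by
    intro t
    induction t with
    | zero =>
      right
      have : i0 ∈ univ.filter (fun u => d u ≤ 0) := by simp [hd0]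
      exact Finset.card_pos.mpr ⟨i0, this⟩
    | succ t ih =>
      by_cases hall : ∀ j, d j ≤ t + 1
      · exact Or.inl hall
      right
      push_neg at hall
      obtain ⟨j0, hj0⟩ := hall
      have hne : (univ.filter (fun j => t < d j)).Nonempty :=
        ⟨j0, by simp; omega⟩
      -- minimal element of d over that set
      obtain ⟨j1, hj1mem, hj1min⟩ := Finset.exists_min_image _ d hne
      simp only [mem_filter, mem_univ, true_and] at hj1mem
      have hdj1 : d j1 ≤ t + 1 := by
        obtain ⟨s, hs⟩ : ∃ s, d j1 = s + 1 := ⟨d j1 - 1, by omega⟩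
        have hspec := hd_spec j1
        rw [hs] at hspec
        obtain ⟨u, hu1, hu2⟩ := hstep_down j1 s hspec
        have hdu : d u ≤ s := hd_le u s hu1
        have hut : d u ≤ t := by
          by_contra hcon
          push_neg at hcon
          have := hj1min u (by simp; omega)
          omega
        have := hstep_up u j1 (d u) (hd_spec u) hu2
        have := hd_le j1 (d u + 1) this
        omega
      have hsub : (univ.filter (fun u => d u ≤ t)) ⊂ (univ.filter (fun u => d u ≤ t + 1)) := by
        constructor
        · intro x hx; simp at hx ⊢; omega
        · intro hsub'
          have := hsub' (by simp [hdj1] : j1 ∈ univ.filter (fun u => d u ≤ t + 1))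
          simp at this
          omega
      cases ih with
      | inl h =>
        exact absurd hj0 (by have := h j0; omega)
      | inr h =>
        have := Finset.card_lt_card hsub
        omega
  have hdle : ∀ j, d j ≤ n - 1 := by
    rcases hclaim (n - 1) with h | h
    · exact h
    · intro j
      have hcard : (univ.filter (fun u => d u ≤ n - 1)).card = n := by
        have h2 : (univ.filter (fun u => d u ≤ n - 1)).card ≤ n := by
          calc (univ.filter (fun u => d u ≤ n - 1)).card ≤ (univ : Finset (Fin n)).card :=
            Finset.card_le_card (Finset.filter_subset _ _)
            _ = n := by simp
        omega
      have heq : univ.filter (fun u => d u ≤ n - 1) = univ :=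
        Finset.eq_univ_of_card _ (by simpa using hcard)
      have hj : j ∈ univ.filter (fun u => d u ≤ n - 1) := by
        rw [heq]; exact mem_univ j
      simpa using hj
  -- main induction
  have hmain : ∀ t : ℕ,
      1 + ∑ u ∈ univ.filter (fun u => d u ≤ t), (∑ j, M u j) ≤
        (∑ j, (M ^ (t + 1)) i0 j) + (univ.filter (fun u => d u ≤ t)).card := by
    intro t
    induction t with
    | zero =>
      have hset : univ.filter (fun u => d u ≤ 0) = {i0} := by
        ext u
        simp only [mem_filter, mem_univ, true_and, Finset.mem_singleton, Nat.le_zero]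
        constructor
        · exact hd0' u
        · rintro rfl; exact hd0
      rw [hset]
      simp only [Finset.sum_singleton, Finset.card_singleton, zero_add, pow_one]
      omega
    | succ t ih =>
      have hsplit : univ.filter (fun u => d u ≤ t + 1) =
          univ.filter (fun u => d u ≤ t) ∪ univ.filter (fun u => d u = t + 1) := by
        ext u
        simp only [mem_filter, mem_univ, true_and, Finset.mem_union]
        omega
      have hdisj : Disjoint (univ.filter (fun u => d u ≤ t))
          (univ.filter (fun u => d u = t + 1)) := by
        rw [Finset.disjoint_filter]
        intro x _ h1 h2
        omega
      -- recurrence for row sums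
      have hrec : ∑ j, (M ^ (t + 1 + 1)) i0 j = ∑ u, (M ^ (t + 1)) i0 u * (∑ j, M u j) := by
        have : ∀ j, (M ^ (t + 1 + 1)) i0 j = ∑ u, (M ^ (t + 1)) i0 u * M u j := by
          intro j
          rw [pow_succ, Matrix.mul_apply]
        rw [Finset.sum_congr rfl (fun j _ => this j), Finset.sum_comm]
        exact Finset.sum_congr rfl (fun u _ => (Finset.mul_sum _ _ _).symm)
      -- pointwise inequality
      have hpoint : ∀ u : Fin n,
          (M ^ (t + 1)) i0 u + (if d u = t + 1 then (∑ j, M u j) else 0) ≤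
          (M ^ (t + 1)) i0 u * (∑ j, M u j) + (if d u = t + 1 then 1 else 0) := by
        intro u
        by_cases h : d u = t + 1
        · simp only [h, if_true]
          have ha : 1 ≤ (M ^ (t + 1)) i0 u := by
            have := hd_spec u; rw [h] at this; omega
          have hr := hrow u
          nlinarith [ha, hr]
        · simp only [h, if_false, add_zero]
          exact Nat.le_mul_of_pos_right _ (hrow u)
      have hkey : (∑ j, (M ^ (t + 1)) i0 j) + ∑ u ∈ univ.filter (fun u => d u = t + 1), (∑ j, M u j) ≤
          (∑ j, (M ^ (t + 1 + 1)) i0 j) + (univ.filter (fun u => d u = t + 1)).card := by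
        have hsum := Finset.sum_le_sum (fun u (_ : u ∈ (univ : Finset (Fin n))) => hpoint u)
        rw [Finset.sum_add_distrib, Finset.sum_add_distrib] at hsum
        rw [hrec, Finset.sum_filter, Finset.card_filter]
        simpa using hsum
      rw [hsplit, Finset.sum_union hdisj, Finset.card_union_of_disjoint hdisj]
      omega
  -- conclude
  have := hmain (n - 1)
  have hn1 : n - 1 + 1 = n := by omega
  rw [hn1] at this
  have huniv : univ.filter (fun u => d u ≤ n - 1) = univ := by
    apply Finset.eq_univ_of_forall
    intro x
    simp [hdle x]
  rw [huniv] at this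
  simpa [add_comm] using this


/-- **Lemma (Ham–Song).** If `M` is a nonnegative integral primitive `n × n` matrix whose
largest eigenvalue `lam` (its Perron–Frobenius eigenvalue, dominating all complex
eigenvalues in modulus) satisfies `lam > 1`, then `lam ^ n ≥ |M| − n + 1`, where `|M|`
is the sum of all entries of `M`. -/
theorem hamSong_bound (n : ℕ) (M : Matrix (Fin n) (Fin n) ℕ)
    (hprim : ∃ k : ℕ, 0 < k ∧ ∀ i j, 0 < (M ^ k) i j)
    (lam : ℝ)
    (hmem : lam ∈ spectrum ℝ (M.map (Nat.cast : ℕ → ℝ)))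
    (hmax : ∀ μ ∈ spectrum ℂ (M.map (Nat.cast : ℕ → ℂ)), ‖μ‖ ≤ lam)
    (hgt : 1 < lam) :
    (∑ i, ∑ j, (M i j : ℝ)) - n + 1 ≤ lam ^ n := by
  rcases Nat.eq_zero_or_pos n with rfl | hn
  · simp
  obtain ⟨k, hk, hpos⟩ := hprim
  have hlam0 : (0:ℝ) ≤ lam := le_of_lt (lt_trans one_pos hgt)
  have hlam1 : (1:ℝ) ≤ lam := le_of_lt hgt
  set S : ℕ := ∑ i, ∑ j, M i j with hS
  have hcastS : (∑ i, ∑ j, (M i j : ℝ)) = (S : ℝ) := by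
    rw [hS]; push_cast; rfl
  rw [hcastS]
  by_cases hSn : S ≤ n
  · have h1 : (1:ℝ) ≤ lam ^ n := one_le_pow₀ hlam1
    have : (S:ℝ) ≤ (n:ℝ) := by exact_mod_cast hSn
    linarith
  push_neg at hSn
  -- c = S + 1 - n ≥ 2
  set c : ℕ := S + 1 - n with hc
  have hcn : c + n = S + 1 := by omega
  have hrowsum : ∀ i0 : Fin n, c ≤ ∑ j, (M ^ n) i0 j := by
    intro i0
    have := aux_rowsum_pow n k M hk hpos i0
    omega
  -- iterate row sums
  have hiter : ∀ (t : ℕ) (i0 : Fin n), c ^ t ≤ ∑ j, (M ^ (n * t)) i0 j := by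
    intro t
    induction t with
    | zero =>
      intro i0
      simp [Matrix.one_apply]
    | succ t ih =>
      intro i0
      have hpow : M ^ (n * (t + 1)) = M ^ (n * t) * M ^ n := by
        rw [← pow_add]
        ring_nf
      have hrec : ∑ j, (M ^ (n * (t+1))) i0 j
          = ∑ u, (M ^ (n * t)) i0 u * (∑ j, (M ^ n) u j) := by
        rw [hpow]
        have : ∀ j, (M ^ (n*t) * M ^ n) i0 j = ∑ u, (M ^ (n*t)) i0 u * (M ^ n) u j :=
          fun j => Matrix.mul_apply
        rw [Finset.sum_congr rfl (fun j _ => this j), Finset.sum_comm]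
        exact Finset.sum_congr rfl (fun u _ => (Finset.mul_sum _ _ _).symm)
      calc c ^ (t + 1) = c ^ t * c := by ring
        _ ≤ (∑ u, (M ^ (n * t)) i0 u) * c := Nat.mul_le_mul_right _ (ih i0)
        _ = ∑ u, (M ^ (n * t)) i0 u * c := by rw [Finset.sum_mul]
        _ ≤ ∑ u, (M ^ (n * t)) i0 u * (∑ j, (M ^ n) u j) :=
            Finset.sum_le_sum (fun u _ => Nat.mul_le_mul_left _ (hrowsum u))
        _ = ∑ j, (M ^ (n * (t+1))) i0 j := hrec.symm
  -- trace lower bound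
  have i0 : Fin n := ⟨0, hn⟩
  have htrace : ∀ t : ℕ, c ^ t ≤ Matrix.trace (M ^ (n * t + k)) := by
    intro t
    have hdiag : ∑ u, (M ^ (n*t)) i0 u ≤ (M ^ (n * t + k)) i0 i0 := by
      rw [pow_add, Matrix.mul_apply]
      calc ∑ u, (M ^ (n*t)) i0 u = ∑ u, (M ^ (n*t)) i0 u * 1 := by simp
        _ ≤ ∑ u, (M ^ (n*t)) i0 u * (M ^ k) u i0 :=
            Finset.sum_le_sum (fun u _ => Nat.mul_le_mul_left _ (hpos u i0))
    calc c ^ t ≤ ∑ u, (M ^ (n*t)) i0 u := hiter t i0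
      _ ≤ (M ^ (n * t + k)) i0 i0 := hdiag
      _ ≤ Matrix.trace (M ^ (n * t + k)) := by
          rw [Matrix.trace]
          exact Finset.single_le_sum (f := fun i => (M ^ (n*t+k)) i i)
            (fun i _ => Nat.zero_le _) (Finset.mem_univ i0)
  -- real side
  have hreal : ∀ t : ℕ, ((c : ℝ)) ^ t ≤ (n : ℝ) * lam ^ k * (lam ^ n) ^ t := by
    intro t
    have h1 : ((c ^ t : ℕ) : ℝ) ≤ ((Matrix.trace (M ^ (n * t + k)) : ℕ) : ℝ) := by
      exact_mod_cast htrace t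
    have h2 := aux_trace_bound M lam hmax hlam0 (n * t + k) (by omega)
    calc ((c:ℝ)) ^ t = ((c ^ t : ℕ) : ℝ) := by push_cast; ring
      _ ≤ (n:ℝ) * lam ^ (n * t + k) := le_trans h1 h2
      _ = (n : ℝ) * lam ^ k * (lam ^ n) ^ t := by
          rw [← pow_mul, pow_add]
          ring
  -- conclude
  have hgoal : (S : ℝ) - n + 1 = (c : ℝ) := by
    have : (c : ℝ) + n = (S : ℝ) + 1 := by exact_mod_cast hcn
    linarith
  rw [hgoal]
  by_contra hcon
  push_neg at hcon
  have hpn : (0:ℝ) < lam ^ n := pow_pos (by linarith) n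
  have hq : 1 < (c : ℝ) / lam ^ n := (one_lt_div hpn).mpr hcon
  obtain ⟨t, ht⟩ := pow_unbounded_of_one_lt ((n : ℝ) * lam ^ k) hq
  have := hreal t
  rw [div_pow] at ht
  have h3 : (n : ℝ) * lam ^ k * (lam ^ n) ^ t < (c:ℝ) ^ t := by
    have hpnt : (0:ℝ) < (lam ^ n) ^ t := pow_pos hpn t
    calc (n : ℝ) * lam ^ k * (lam ^ n) ^ t < ((c:ℝ) ^ t / (lam ^ n) ^ t) * (lam ^ n) ^ t := by
          exact mul_lt_mul_of_pos_right ht hpnt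
      _ = (c:ℝ) ^ t := by field_simp
  linarith
end

section
/- Let M be a nonnegative integral irreducible n×n matrix with Perron–Frobenius eigenvalue λ > 1, and let S = (sum of all entries of M) − n. Then λ^n ≥ S + 1, provided M is primitive. -/
open Finset

section Aux

open scoped ENNReal NNReal
open Filter

/-- Every row of an irreducible nonnegative integer matrix has a positive entry. -/
private lemma pesb_row_pos (n : ℕ) (M : Matrix (Fin n) (Fin n) ℕ)
    (hirr : ∀ i j : Fin n, ∃ k : ℕ, 0 < k ∧ 0 < (M ^ k) i j) (j : Fin n) :
    0 < ∑ k, M j k := by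
  by_contra h
  push_neg at h
  interval_cases h' : (∑ k, M j k)
  have hz : ∀ k, M j k = 0 := fun k => Finset.sum_eq_zero_iff.mp h' k (mem_univ k)
  obtain ⟨k, hk, hpos⟩ := hirr j j
  obtain ⟨k, rfl⟩ := Nat.exists_eq_succ_of_ne_zero hk.ne'
  rw [pow_succ'] at hpos
  have : (M * M ^ k) j j = 0 := by
    rw [Matrix.mul_apply]
    exact Finset.sum_eq_zero fun x _ => by rw [hz x, zero_mul]
  omega

/-- In an irreducible matrix, every vertex is reachable from every vertex in
fewer than `n` steps. -/
private lemma pesb_reach (n : ℕ) (hn : 0 < n) (M : Matrix (Fin n) (Fin n) ℕ)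
    (i j : Fin n) (k : ℕ) (hk : 0 < (M ^ k) i j) :
    ∃ t, t < n ∧ 0 < (M ^ t) i j := by
  classical
  set C : ℕ → Finset (Fin n) := fun t => univ.filter fun x => ∃ s ≤ t, 0 < (M ^ s) i x with hC
  have hmem : ∀ t x, x ∈ C t ↔ ∃ s ≤ t, 0 < (M ^ s) i x := by
    intro t x; simp [hC]
  have hmono : ∀ a b, a ≤ b → C a ⊆ C b := by
    intro a b hab x hx
    rw [hmem] at hx ⊢
    obtain ⟨s, hs, h⟩ := hx
    exact ⟨s, hs.trans hab, h⟩
  have hstep : ∀ t, C (t + 1) = C t ∪ univ.filter fun y => ∃ x ∈ C t, 0 < M x y := by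
    intro t
    ext y
    simp only [Finset.mem_union, hmem, Finset.mem_filter, mem_univ, true_and]
    constructor
    · rintro ⟨s, hs, hpos⟩
      rcases Nat.lt_or_ge s (t + 1) with h | h
      · exact Or.inl ⟨s, Nat.lt_succ_iff.mp h, hpos⟩
      · have : s = t + 1 := le_antisymm hs h
        subst this
        rw [pow_succ, Matrix.mul_apply] at hpos
        obtain ⟨x, -, hx⟩ : ∃ x ∈ univ, 0 < (M ^ t) i x * M x y := by
          by_contra hc
          push_neg at hc
          have : ∑ x, (M ^ t) i x * M x y = 0 :=
            Finset.sum_eq_zero fun x hx => Nat.le_zero.mp (hc x hx)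
          omega
        have h1 : (M ^ t) i x ≠ 0 := fun h => by rw [h, zero_mul] at hx; exact lt_irrefl 0 hx
        have h2 : M x y ≠ 0 := fun h => by rw [h, mul_zero] at hx; exact lt_irrefl 0 hx
        exact Or.inr ⟨x, ⟨t, le_refl t, Nat.pos_of_ne_zero h1⟩, Nat.pos_of_ne_zero h2⟩
    · rintro (⟨s, hs, hpos⟩ | ⟨x, hx, hpos⟩)
      · exact ⟨s, hs.trans (Nat.le_succ t), hpos⟩
      · obtain ⟨s, hs, hsx⟩ := hx
        refine ⟨s + 1, Nat.succ_le_succ hs, ?_⟩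
        rw [pow_succ, Matrix.mul_apply]
        calc 0 < (M ^ s) i x * M x y := by positivity
        _ ≤ ∑ z, (M ^ s) i z * M z y :=
          Finset.single_le_sum (f := fun z => (M ^ s) i z * M z y)
            (fun z _ => Nat.zero_le _) (mem_univ x)
  have hstab : ∀ t, C t = C (t + 1) → ∀ m, C (t + m) = C t := by
    intro t ht m
    induction m with
    | zero => rfl
    | succ m ih =>
      have : C (t + m + 1) = C (t + m) ∪ univ.filter fun y => ∃ x ∈ C (t + m), 0 < M x y :=
        hstep (t + m)
      rw [ih] at this
      rw [show t + (m + 1) = t + m + 1 from rfl, this, ← hstep t, ← ht]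
  have hself : ∀ t, i ∈ C t := by
    intro t
    rw [hmem]
    exact ⟨0, Nat.zero_le t, by simp [Matrix.one_apply_eq]⟩
  have hgrow : ∀ t, C t = C (t + 1) ∨ t + 2 ≤ (C (t + 1)).card := by
    intro t
    induction t with
    | zero =>
      by_cases h : C 0 = C 1
      · exact Or.inl h
      · refine Or.inr ?_
        have hss : C 0 ⊂ C (0 + 1) := (hmono 0 (0 + 1) (by omega)).ssubset_of_ne h
        have h1 : 1 ≤ (C 0).card := Finset.card_pos.mpr ⟨i, hself 0⟩
        have := Finset.card_lt_card hss
        omega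
    | succ t ih =>
      by_cases h : C (t + 1) = C (t + 1 + 1)
      · exact Or.inl h
      · refine Or.inr ?_
        rcases ih with ih | ih
        · refine absurd ?_ h
          have e1 : C (t + 1) = C t := hstab t ih 1
          have e2 : C (t + 2) = C t := hstab t ih 2
          rw [show t + 1 + 1 = t + 2 from rfl, e1, e2]
        · have hss : C (t + 1) ⊂ C (t + 1 + 1) :=
            (hmono (t + 1) (t + 1 + 1) (by omega)).ssubset_of_ne h
          have := Finset.card_lt_card hss
          omega
  have hkey : C (n - 1) = C (n - 1 + 1) := by
    rcases hgrow (n - 1) with h | h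
    · exact h
    · exfalso
      have hle : (C (n - 1 + 1)).card ≤ n := by
        simpa using Finset.card_le_univ (C (n - 1 + 1))
      omega
  have hj : j ∈ C (n - 1) := by
    have h1 : j ∈ C k := (hmem k j).mpr ⟨k, le_refl k, hk⟩
    have h2 : C k ⊆ C (n - 1 + k) := hmono k (n - 1 + k) (by omega)
    have h3 : C (n - 1 + k) = C (n - 1) := hstab (n - 1) hkey k
    rw [← h3]
    exact h2 h1
  obtain ⟨s, hs, hpos⟩ := (hmem (n - 1) j).mp hj
  exact ⟨s, by omega, hpos⟩

private lemma pesb_telescope (n : ℕ) (M : Matrix (Fin n) (Fin n) ℕ) :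
    ∀ m (i : Fin n), ∑ j, ((M ^ m) i j : ℝ) =
      1 + ∑ t ∈ Finset.range m, ∑ j, ((M ^ t) i j : ℝ) * ((∑ k, (M j k : ℝ)) - 1) := by
  intro m
  induction m with
  | zero =>
    intro i
    simp [Matrix.one_apply]
  | succ m ih =>
    intro i
    calc ∑ j, ((M ^ (m + 1)) i j : ℝ)
        = ∑ j, ∑ k, ((M ^ m) i k : ℝ) * (M k j : ℝ) := by
          refine Finset.sum_congr rfl fun j _ => ?_
          rw [pow_succ, Matrix.mul_apply]
          push_cast
          rfl
      _ = ∑ k, ((M ^ m) i k : ℝ) * ∑ j, (M k j : ℝ) := by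
          rw [Finset.sum_comm]
          simp_rw [Finset.mul_sum]
      _ = ∑ k, ((M ^ m) i k : ℝ) * ((∑ j, (M k j : ℝ)) - 1) + ∑ k, ((M ^ m) i k : ℝ) := by
          rw [← Finset.sum_add_distrib]
          exact Finset.sum_congr rfl fun k _ => by ring
      _ = 1 + ∑ t ∈ Finset.range (m + 1), ∑ j, ((M ^ t) i j : ℝ) *
            ((∑ k, (M j k : ℝ)) - 1) := by
          rw [ih i, Finset.sum_range_succ]
          ring

private lemma pesb_pow_rowsum (n : ℕ) (N : Matrix (Fin n) (Fin n) ℕ) (r : ℝ) (hr : 0 ≤ r)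
    (h : ∀ i, r ≤ ∑ j, (N i j : ℝ)) :
    ∀ m (i : Fin n), r ^ m ≤ ∑ j, ((N ^ m) i j : ℝ) := by
  intro m
  induction m with
  | zero =>
    intro i
    simp [Matrix.one_apply]
  | succ m ih =>
    intro i
    have key : ∑ j, ((N ^ (m + 1)) i j : ℝ) = ∑ k, (N i k : ℝ) * ∑ j, ((N ^ m) k j : ℝ) := by
      calc ∑ j, ((N ^ (m + 1)) i j : ℝ)
          = ∑ j, ∑ k, (N i k : ℝ) * ((N ^ m) k j : ℝ) := by
            refine Finset.sum_congr rfl fun j _ => ?_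
            rw [pow_succ', Matrix.mul_apply]
            push_cast
            rfl
        _ = ∑ k, (N i k : ℝ) * ∑ j, ((N ^ m) k j : ℝ) := by
            rw [Finset.sum_comm]
            simp_rw [Finset.mul_sum]
    rw [key, pow_succ']
    calc r * r ^ m ≤ (∑ k, (N i k : ℝ)) * r ^ m :=
          mul_le_mul_of_nonneg_right (h i) (pow_nonneg hr m)
      _ = ∑ k, (N i k : ℝ) * r ^ m := by rw [Finset.sum_mul]
      _ ≤ ∑ k, (N i k : ℝ) * ∑ j, ((N ^ m) k j : ℝ) :=
          Finset.sum_le_sum fun k _ =>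
            mul_le_mul_of_nonneg_left (ih k) (Nat.cast_nonneg _)

attribute [local instance] Matrix.linftyOpNormedRing Matrix.linftyOpNormedAlgebra
  Matrix.linftyOpNormedSpace

private lemma pesb_spec_bound (n : ℕ) (B : Matrix (Fin n) (Fin n) ℂ) (r : ℝ≥0)
    (hB : ∀ m : ℕ, (r : ℝ≥0∞) ^ m ≤ ‖B ^ m‖₊) (L : ℝ≥0)
    (hL : ∀ μ ∈ spectrum ℂ B, ‖μ‖₊ ≤ L) : r ≤ L := by
  haveI : CompleteSpace (Matrix (Fin n) (Fin n) ℂ) := FiniteDimensional.complete ℂ _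
  have gelfand := spectrum.pow_nnnorm_pow_one_div_tendsto_nhds_spectralRadius B
  have hlow : (r : ℝ≥0∞) ≤ spectralRadius ℂ B := by
    refine ge_of_tendsto gelfand ?_
    filter_upwards [Filter.eventually_ge_atTop 1] with m hm
    have h1 : (r : ℝ≥0∞) = ((r : ℝ≥0∞) ^ m) ^ (1 / (m : ℝ)) := by
      rw [← ENNReal.rpow_natCast (r : ℝ≥0∞) m, ← ENNReal.rpow_mul,
        mul_one_div_cancel (show (m:ℝ) ≠ 0 by exact_mod_cast Nat.one_le_iff_ne_zero.mp hm),
        ENNReal.rpow_one]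
    rw [h1]
    exact ENNReal.rpow_le_rpow (hB m) (by positivity)
  have hup : spectralRadius ℂ B ≤ (L : ℝ≥0∞) := by
    rw [spectralRadius]
    exact iSup₂_le fun μ hμ => by exact_mod_cast hL μ hμ
  exact_mod_cast hlow.trans hup

/-- The key norm estimate packaged for the main proof. -/
private lemma pesb_norm_bound (n : ℕ) (hn : 0 < n) (M : Matrix (Fin n) (Fin n) ℕ) (r : ℝ)
    (hr : 0 ≤ r) (hrow : ∀ i, r ≤ ∑ j, ((M ^ n) i j : ℝ)) (m : ℕ) :
    (Real.toNNReal r : ℝ≥0∞) ^ m ≤ ‖((M.map (Nat.cast : ℕ → ℂ)) ^ n) ^ m‖₊ := by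
  have hmap : ∀ t : ℕ, (M.map (Nat.cast : ℕ → ℂ)) ^ t = (M ^ t).map (Nat.cast : ℕ → ℂ) := by
    intro t
    have := map_pow ((Nat.castRingHom ℂ).mapMatrix) M t
    simpa [RingHom.mapMatrix_apply] using this.symm
  have hBm : ((M.map (Nat.cast : ℕ → ℂ)) ^ n) ^ m = (M ^ (n * m)).map (Nat.cast : ℕ → ℂ) := by
    rw [← pow_mul, hmap]
  set i0 : Fin n := ⟨0, hn⟩
  have hrs : r ^ m ≤ ∑ j, (((M ^ n) ^ m) i0 j : ℝ) :=
    pesb_pow_rowsum n (M ^ n) r hr hrow m i0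
  rw [← pow_mul] at hrs
  -- pass through ℝ≥0
  rw [← ENNReal.coe_pow, ENNReal.coe_le_coe]
  have h1 : ∑ j, ‖(((M.map (Nat.cast : ℕ → ℂ)) ^ n) ^ m) i0 j‖₊ ≤
      ‖((M.map (Nat.cast : ℕ → ℂ)) ^ n) ^ m‖₊ := by
    rw [Matrix.linfty_opNNNorm_def]
    exact Finset.le_sup (f := fun i =>
      ∑ j, ‖(((M.map (Nat.cast : ℕ → ℂ)) ^ n) ^ m) i j‖₊) (mem_univ i0)
  refine le_trans ?_ h1
  rw [← NNReal.coe_le_coe]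
  push_cast
  rw [Real.coe_toNNReal r hr]
  refine le_trans hrs (le_of_eq ?_)
  refine Finset.sum_congr rfl fun j _ => ?_
  rw [hBm]
  simp [Matrix.map_apply]

end Aux

/-- Let `M` be a nonnegative integral irreducible `n × n` matrix with Perron–Frobenius
eigenvalue `lam > 1`, and let `S = (sum of all entries of M) − n`. If `M` is primitive,
then `lam ^ n ≥ S + 1`. -/
theorem primitive_entry_sum_bound (n : ℕ) (M : Matrix (Fin n) (Fin n) ℕ)
    (hirr : ∀ i j : Fin n, ∃ k : ℕ, 0 < k ∧ 0 < (M ^ k) i j)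
    (hprim : ∃ k : ℕ, 0 < k ∧ ∀ i j, 0 < (M ^ k) i j)
    (lam : ℝ)
    (hmem : lam ∈ spectrum ℝ (M.map (Nat.cast : ℕ → ℝ)))
    (hmax : ∀ μ ∈ spectrum ℂ (M.map (Nat.cast : ℕ → ℂ)), ‖μ‖ ≤ lam)
    (hgt : 1 < lam)
    (S : ℤ) (hS : S = (∑ i, ∑ j, (M i j : ℤ)) - n) :
    (S : ℝ) + 1 ≤ lam ^ n := by
  rcases Nat.eq_zero_or_pos n with rfl | hn
  · simp only [Finset.univ_eq_empty, Finset.sum_empty, Nat.cast_zero, sub_zero] at hS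
    subst hS
    norm_num
  -- row sums are at least 1
  have hrow : ∀ j, (1 : ℝ) ≤ ∑ k, (M j k : ℝ) := by
    intro j
    have := pesb_row_pos n M hirr j
    exact_mod_cast this
  -- the sum S in real terms
  have hSr : (S : ℝ) = ∑ j, ((∑ k, (M j k : ℝ)) - 1) := by
    rw [Finset.sum_sub_distrib]
    simp only [Finset.sum_const, card_univ, Fintype.card_fin, nsmul_eq_mul, mul_one]
    rw [hS]
    push_cast
    ring
  have hS0 : (0 : ℝ) ≤ (S : ℝ) := by
    rw [hSr]
    exact Finset.sum_nonneg fun j _ => sub_nonneg.mpr (hrow j)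
  -- every row sum of M ^ n is at least S + 1
  have hbig : ∀ i, (S : ℝ) + 1 ≤ ∑ j, ((M ^ n) i j : ℝ) := by
    intro i
    rw [pesb_telescope n M n i, hSr, add_comm]
    refine (add_le_add_iff_left 1).mpr ?_
    rw [Finset.sum_comm]
    refine Finset.sum_le_sum fun j _ => ?_
    obtain ⟨k, -, hk⟩ := hirr i j
    obtain ⟨t, ht, hpos⟩ := pesb_reach n hn M i j k hk
    calc (∑ k, (M j k : ℝ)) - 1
        ≤ ((M ^ t) i j : ℝ) * ((∑ k, (M j k : ℝ)) - 1) := by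
          refine le_mul_of_one_le_left (sub_nonneg.mpr (hrow j)) ?_
          exact_mod_cast hpos
      _ ≤ ∑ t ∈ Finset.range n, ((M ^ t) i j : ℝ) * ((∑ k, (M j k : ℝ)) - 1) :=
          Finset.single_le_sum
            (f := fun t => ((M ^ t) i j : ℝ) * ((∑ k, (M j k : ℝ)) - 1))
            (fun t _ => mul_nonneg (Nat.cast_nonneg _) (sub_nonneg.mpr (hrow j)))
            (Finset.mem_range.mpr ht)
  -- spectral bound
  have hr0 : (0 : ℝ) ≤ (S : ℝ) + 1 := by linarith
  have hnorm := pesb_norm_bound n hn M ((S : ℝ) + 1) hr0 hbig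
  have hLn : (0 : ℝ) ≤ lam ^ n := pow_nonneg (by linarith) n
  have hL : ∀ μ ∈ spectrum ℂ ((M.map (Nat.cast : ℕ → ℂ)) ^ n),
      ‖μ‖₊ ≤ Real.toNNReal (lam ^ n) := by
    intro μ hμ
    rw [spectrum.map_pow_of_pos (M.map (Nat.cast : ℕ → ℂ)) hn] at hμ
    obtain ⟨ν, hν, rfl⟩ := hμ
    rw [Real.le_toNNReal_iff_coe_le hLn]
    push_cast [coe_nnnorm]
    rw [norm_pow]
    refine pow_le_pow_left₀ (norm_nonneg ν) ?_ n
    exact hmax ν hν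
  have := pesb_spec_bound n ((M.map (Nat.cast : ℕ → ℂ)) ^ n)
    (Real.toNNReal ((S : ℝ) + 1)) hnorm (Real.toNNReal (lam ^ n)) hL
  have hfinal := NNReal.coe_le_coe.mpr this
  rwa [Real.coe_toNNReal _ hr0, Real.coe_toNNReal _ hLn] at hfinal
end
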